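/- Let I ∈ ℤ_{≥1}, ρ ∈ (0, I). For ε > 0 let q_ε = e^{√ε} and let χ_ε be the unique negative real solution of ∑_{i=1}^I χ/(χ - q_ε^i) = ρ. Then lim_{ε ↓ 0} χ_ε = ρ/(ρ - I), and consequently lim_{ε ↓ 0} (ρ - ∑_{i=1}^I χ_ε²/(q_ε^i - χ_ε)²) = ρ(I - ρ)/I. -/

import Mathlib

open Filter

lemma chi_bounds (I : ℕ) (hI : 1 ≤ I) (ρ : ℝ) (hρ0 : 0 < ρ) (hρI : ρ < I)
    (q c : ℝ) (hq : 1 ≤ q) (hc : c < 0)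
    (heq : ∑ i ∈ Finset.Icc 1 I, c / (c - q ^ i) = ρ) :
    -(ρ * q ^ I / ((I : ℝ) - ρ)) ≤ c ∧ c ≤ -(ρ * q / ((I : ℝ) - ρ)) := by
  set x : ℝ := -c with hx
  have hcx : c = -x := by rw [hx]; ring
  have hx0 : 0 < x := by rw [hx]; linarith
  have hIρ : 0 < (I : ℝ) - ρ := by linarith
  have hq0 : 0 < q := by linarith
  have hrw : ∀ i ∈ Finset.Icc 1 I, c / (c - q ^ i) = x / (x + q ^ i) := by
    intro i hi
    rw [hcx, show -x - q ^ i = -(x + q ^ i) by ring, neg_div_neg_eq]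
  have heq' : ∑ i ∈ Finset.Icc 1 I, x / (x + q ^ i) = ρ := by
    rw [← heq]; exact (Finset.sum_congr rfl hrw).symm
  have hcard : ((Finset.Icc 1 I).card : ℝ) = I := by
    rw [Nat.card_Icc]; push_cast; ring
  -- pointwise bounds
  have hub : ρ ≤ (I : ℝ) * (x / (x + q)) := by
    rw [← heq']
    calc ∑ i ∈ Finset.Icc 1 I, x / (x + q ^ i)
        ≤ ∑ _i ∈ Finset.Icc 1 I, x / (x + q) := by
          apply Finset.sum_le_sum
          intro i hi
          obtain ⟨h1i, hiI⟩ := Finset.mem_Icc.mp hi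
          have hqi : q ≤ q ^ i := by
            calc q = q ^ 1 := (pow_one q).symm
            _ ≤ q ^ i := pow_le_pow_right₀ hq h1i
          gcongr
      _ = (I : ℝ) * (x / (x + q)) := by
          rw [Finset.sum_const, nsmul_eq_mul, hcard]
  have hlb : (I : ℝ) * (x / (x + q ^ I)) ≤ ρ := by
    rw [← heq']
    calc (I : ℝ) * (x / (x + q ^ I))
        = ∑ _i ∈ Finset.Icc 1 I, x / (x + q ^ I) := by
          rw [Finset.sum_const, nsmul_eq_mul, hcard]
      _ ≤ ∑ i ∈ Finset.Icc 1 I, x / (x + q ^ i) := by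
          apply Finset.sum_le_sum
          intro i hi
          obtain ⟨h1i, hiI⟩ := Finset.mem_Icc.mp hi
          have hqi : q ^ i ≤ q ^ I := pow_le_pow_right₀ hq hiI
          gcongr
  have hqI0 : 0 < q ^ I := by positivity
  constructor
  · -- -(ρ q^I/(I-ρ)) ≤ c  ↔  x ≤ ρ q^I/(I-ρ)
    have h1 : (I : ℝ) * x ≤ ρ * (x + q ^ I) := by
      have hpos : 0 < x + q ^ I := by linarith
      rw [← mul_div_assoc] at hlb
      exact (div_le_iff₀ hpos).mp hlb
    rw [hcx, neg_le_neg_iff, le_div_iff₀ hIρ]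
    nlinarith
  · have h1 : ρ * (x + q) ≤ (I : ℝ) * x := by
      have hpos : 0 < x + q := by linarith
      rw [← mul_div_assoc] at hub
      exact (le_div_iff₀ hpos).mp hub
    rw [hcx, neg_le_neg_iff, div_le_iff₀ hIρ]
    nlinarith

/-- **Limiting variance under weakly asymmetric scaling.** Let `I ≥ 1`, `ρ ∈ (0, I)`.
For `ε > 0` set `q_ε = e^{√ε}` and let `χ_ε` be the (unique) negative real solution of
`∑_{i=1}^{I} χ/(χ - q_εⁱ) = ρ`. Then `χ_ε → ρ/(ρ - I)` as `ε ↓ 0`, and consequently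
`ρ - ∑_{i=1}^{I} χ_ε²/(q_εⁱ - χ_ε)² → ρ(I - ρ)/I`. -/
theorem limit_chi_and_variance (I : ℕ) (hI : 1 ≤ I) (ρ : ℝ) (hρ0 : 0 < ρ) (hρI : ρ < I)
    (χ : ℝ → ℝ) (hχneg : ∀ ε : ℝ, 0 < ε → χ ε < 0)
    (hχeq : ∀ ε : ℝ, 0 < ε →
      ∑ i ∈ Finset.Icc 1 I, χ ε / (χ ε - Real.exp (Real.sqrt ε) ^ i) = ρ) :
    Tendsto χ (nhdsWithin 0 (Set.Ioi 0)) (nhds (ρ / (ρ - I))) ∧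
      Tendsto (fun ε : ℝ =>
          ρ - ∑ i ∈ Finset.Icc 1 I, (χ ε) ^ 2 / (Real.exp (Real.sqrt ε) ^ i - χ ε) ^ 2)
        (nhdsWithin 0 (Set.Ioi 0)) (nhds (ρ * ((I : ℝ) - ρ) / I)) := by
  have hIρ : 0 < (I : ℝ) - ρ := by linarith
  have hρIne : ρ - (I : ℝ) ≠ 0 := by intro h; linarith [sub_eq_zero.mp h]
  have hI0 : (I : ℝ) ≠ 0 := by
    have : (0 : ℝ) < I := lt_trans hρ0 hρI
    exact ne_of_gt this
  have hqt : Tendsto (fun ε : ℝ => Real.exp (Real.sqrt ε)) (nhdsWithin 0 (Set.Ioi 0))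
      (nhds 1) := by
    have hc : ContinuousAt (fun ε : ℝ => Real.exp (Real.sqrt ε)) 0 :=
      (Real.continuous_exp.comp Real.continuous_sqrt).continuousAt
    have h := hc.tendsto.mono_left (nhdsWithin_le_nhds (s := Set.Ioi (0:ℝ)))
    simpa using h
  have hbnd : ∀ ε ∈ Set.Ioi (0 : ℝ),
      -(ρ * (Real.exp (Real.sqrt ε)) ^ I / ((I : ℝ) - ρ)) ≤ χ ε ∧
        χ ε ≤ -(ρ * Real.exp (Real.sqrt ε) / ((I : ℝ) - ρ)) := fun ε hε =>
    chi_bounds I hI ρ hρ0 hρI _ _ (Real.one_le_exp (Real.sqrt_nonneg ε))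
      (hχneg ε hε) (hχeq ε hε)
  have hlow : Tendsto (fun ε : ℝ => -(ρ * (Real.exp (Real.sqrt ε)) ^ I / ((I : ℝ) - ρ)))
      (nhdsWithin 0 (Set.Ioi 0)) (nhds (ρ / (ρ - I))) := by
    have h := (((hqt.pow I).const_mul ρ).div_const ((I : ℝ) - ρ)).neg
    have hv : ρ / (ρ - (I : ℝ)) = -(ρ * (1 : ℝ) ^ I / ((I : ℝ) - ρ)) := by
      rw [one_pow]; field_simp
      ring
    rw [hv]; exact h
  have hupp : Tendsto (fun ε : ℝ => -(ρ * Real.exp (Real.sqrt ε) / ((I : ℝ) - ρ)))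
      (nhdsWithin 0 (Set.Ioi 0)) (nhds (ρ / (ρ - I))) := by
    have h := ((hqt.const_mul ρ).div_const ((I : ℝ) - ρ)).neg
    have hv : ρ / (ρ - (I : ℝ)) = -(ρ * (1 : ℝ) / ((I : ℝ) - ρ)) := by
      field_simp
      ring
    rw [hv]; exact h
  have h1 : Tendsto χ (nhdsWithin 0 (Set.Ioi 0)) (nhds (ρ / (ρ - I))) := by
    refine tendsto_of_tendsto_of_tendsto_of_le_of_le' hlow hupp ?_ ?_
    · exact Filter.eventually_of_mem self_mem_nhdsWithin fun ε hε => (hbnd ε hε).1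
    · exact Filter.eventually_of_mem self_mem_nhdsWithin fun ε hε => (hbnd ε hε).2
  refine ⟨h1, ?_⟩
  have hdne : ((1 : ℝ) - ρ / (ρ - I)) ≠ 0 := by
    have : (1 : ℝ) - ρ / (ρ - I) = -I / (ρ - I) := by field_simp; ring
    rw [this]
    exact div_ne_zero (neg_ne_zero.mpr hI0) hρIne
  have hsum : Tendsto
      (fun ε : ℝ => ∑ i ∈ Finset.Icc 1 I, (χ ε) ^ 2 / (Real.exp (Real.sqrt ε) ^ i - χ ε) ^ 2)
      (nhdsWithin 0 (Set.Ioi 0))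
      (nhds (∑ i ∈ Finset.Icc 1 I, (ρ / (ρ - I)) ^ 2 / ((1 : ℝ) - ρ / (ρ - I)) ^ 2)) := by
    apply tendsto_finset_sum
    intro i _
    have hden : Tendsto (fun ε : ℝ => (Real.exp (Real.sqrt ε) ^ i - χ ε) ^ 2)
        (nhdsWithin 0 (Set.Ioi 0)) (nhds (((1 : ℝ) - ρ / (ρ - I)) ^ 2)) := by
      have := ((hqt.pow i).sub h1).pow 2
      simpa using this
    exact (h1.pow 2).div hden (pow_ne_zero 2 hdne)
  have hval : ρ * ((I : ℝ) - ρ) / I =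
      ρ - ∑ _i ∈ Finset.Icc 1 I, (ρ / (ρ - I)) ^ 2 / ((1 : ℝ) - ρ / (ρ - I)) ^ 2 := by
    rw [Finset.sum_const, nsmul_eq_mul]
    have hcard : ((Finset.Icc 1 I).card : ℝ) = I := by
      rw [Nat.card_Icc]; push_cast; ring
    rw [hcard]
    field_simp
    ring_nf
    field_simp
  rw [hval]
  exact tendsto_const_nhds.sub hsum
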